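/- For every n ≥ 1 and m ≥ 1: if there exists a finite simple graph on m vertices satisfying G ⇒ T_n, then there exists a finite simple graph on m(m+1) vertices satisfying G ⇒ T_{n+1}. (Equivalently, the isometric Ramsey numbers satisfy IR(T_{n+1}) ≤ IR(T_n)·(IR(T_n)+1).) -/

import Mathlib

/-- An orientation of a simple graph `G`: an asymmetric relation `D` whose
symmetrization is exactly the adjacency relation of `G`. -/
def IsOrientation {V : Type*} (G : SimpleGraph V) (D : V → V → Prop) : Prop :=
  (∀ u v, ¬ (D u v ∧ D v u)) ∧ ∀ u v, G.Adj u v ↔ (D u v ∨ D v u)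

/-- A digraph structure on a relation: no loops and no pairs of opposite arcs. -/
def IsDigraph {W : Type*} (E : W → W → Prop) : Prop :=
  ∀ u v, ¬ (E u v ∧ E v u)

/-- `G ⇒ E`: every orientation `D` of `G` contains an isometric copy of the digraph `E`:
an injective map `f` inducing an isomorphism onto its image, preserving orientations,
such that distances (in the underlying undirected graphs) are preserved. -/
def IsoRamseyArrow {V W : Type*} (G : SimpleGraph V) (E : W → W → Prop) : Prop :=
  ∀ D : V → V → Prop, IsOrientation G D →
    ∃ f : W → V, Function.Injective f ∧
      (∀ u v, E u v ↔ D (f u) (f v)) ∧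
      (∀ u v, (SimpleGraph.fromRel E).edist u v = G.edist (f u) (f v))

/-- An oriented tree: a digraph whose underlying undirected graph is a tree. -/
def IsOrientedTree {W : Type*} (E : W → W → Prop) : Prop :=
  IsDigraph E ∧ (SimpleGraph.fromRel E).IsTree

/-- `G ⇒ 𝒯ₙ` : `G ⇒ T` for every oriented tree `T` on `n` vertices. -/
def IsoRamseyArrowTrees {V : Type*} (G : SimpleGraph V) (n : ℕ) : Prop :=
  ∀ (W : Type) (_ : Fintype W), Fintype.card W = n →
    ∀ E : W → W → Prop, IsOrientedTree E → IsoRamseyArrow G E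


section AuxIsoRamsey
open SimpleGraph

lemma boxProd_walk_le {α β : Type*} {G : SimpleGraph α} {H : SimpleGraph β} :
    ∀ {p q : α × β} (w : (G □ H).Walk p q),
      G.edist p.1 q.1 + H.edist p.2 q.2 ≤ (w.length : ℕ∞) := by
  intro p q w
  induction w with
  | nil => simp [edist_self]
  | @cons a b c h w ih =>
    rw [Walk.length_cons]
    rcases (boxProd_adj).mp h with ⟨h1, h2⟩ | ⟨h1, h2⟩
    · have e1 : G.edist a.1 c.1 ≤ 1 + G.edist b.1 c.1 := by
        calc G.edist a.1 c.1 ≤ G.edist a.1 b.1 + G.edist b.1 c.1 := SimpleGraph.edist_triangle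
          _ ≤ 1 + G.edist b.1 c.1 := by
            gcongr
            exact le_of_eq (edist_eq_one_iff_adj.mpr h1)
      have e2 : H.edist a.2 c.2 = H.edist b.2 c.2 := by rw [h2]
      calc G.edist a.1 c.1 + H.edist a.2 c.2 ≤ (1 + G.edist b.1 c.1) + H.edist b.2 c.2 := by
            rw [e2]; gcongr
        _ = 1 + (G.edist b.1 c.1 + H.edist b.2 c.2) := by ring
        _ ≤ 1 + (w.length : ℕ∞) := by gcongr
        _ = ((w.length + 1 : ℕ) : ℕ∞) := by push_cast; ring
    · have e1 : H.edist a.2 c.2 ≤ 1 + H.edist b.2 c.2 := by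
        calc H.edist a.2 c.2 ≤ H.edist a.2 b.2 + H.edist b.2 c.2 := SimpleGraph.edist_triangle
          _ ≤ 1 + H.edist b.2 c.2 := by
            gcongr
            exact le_of_eq (edist_eq_one_iff_adj.mpr h1)
      have e2 : G.edist a.1 c.1 = G.edist b.1 c.1 := by rw [h2]
      calc G.edist a.1 c.1 + H.edist a.2 c.2 ≤ G.edist b.1 c.1 + (1 + H.edist b.2 c.2) := by
            rw [e2]; gcongr
        _ = 1 + (G.edist b.1 c.1 + H.edist b.2 c.2) := by ring
        _ ≤ 1 + (w.length : ℕ∞) := by gcongr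
        _ = ((w.length + 1 : ℕ) : ℕ∞) := by push_cast; ring

lemma boxProd_edist {α β : Type*} (G : SimpleGraph α) (H : SimpleGraph β) (p q : α × β) :
    (G □ H).edist p q = G.edist p.1 q.1 + H.edist p.2 q.2 := by
  refine le_antisymm ?_ ?_
  · rcases eq_or_ne (G.edist p.1 q.1) ⊤ with h1 | h1
    · simp [h1]
    rcases eq_or_ne (H.edist p.2 q.2) ⊤ with h2 | h2
    · simp [h2]
    obtain ⟨w1, hw1⟩ := exists_walk_of_edist_ne_top h1
    obtain ⟨w2, hw2⟩ := exists_walk_of_edist_ne_top h2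
    have hle := SimpleGraph.edist_le ((w1.boxProdLeft H p.2).append (w2.boxProdRight G q.1))
    rw [Walk.length_append] at hle
    have l1 : (w1.boxProdLeft H p.2).length = w1.length := Walk.length_map _ _
    have l2 : (w2.boxProdRight G q.1).length = w2.length := Walk.length_map _ _
    rw [l1, l2] at hle
    calc (G □ H).edist p q ≤ ((w1.length + w2.length : ℕ) : ℕ∞) := hle
      _ = G.edist p.1 q.1 + H.edist p.2 q.2 := by push_cast; rw [hw1, hw2]
  · rw [SimpleGraph.edist_eq_sInf]
    refine le_sInf ?_
    rintro _ ⟨w, rfl⟩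
    exact boxProd_walk_le w

lemma edist_layer {α : Type*} (G : SimpleGraph α) {k : ℕ} (a b : α) (i : Fin k) :
    (G □ (⊤ : SimpleGraph (Fin k))).edist (a, i) (b, i) = G.edist a b := by
  rw [boxProd_edist]; simp [edist_self]

lemma edist_cross {α : Type*} (G : SimpleGraph α) {k : ℕ} (a b : α) {i j : Fin k} (hij : i ≠ j) :
    (G □ (⊤ : SimpleGraph (Fin k))).edist (a, i) (b, j) = G.edist a b + 1 := by
  rw [boxProd_edist]
  simp [SimpleGraph.edist_top_of_ne hij]


lemma leaf_not_mem_path {W : Type*} {T : SimpleGraph W} {x y : W}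
    (hleaf : ∀ z, T.Adj x z → z = y)
    {u v : W} (p : T.Walk u v) (hp : p.IsPath) (hu : u ≠ x) (hv : v ≠ x) : x ∉ p.support := by
  classical
  intro hx
  have hspec := (p.take_spec hx).symm
  set q := p.takeUntil x hx with hq
  set r := p.dropUntil x hx with hr
  -- y ∈ q.support
  obtain ⟨z, hadj, q2, hq2⟩ := Walk.exists_eq_cons_of_ne (Ne.symm hu) q.reverse
  have hz : z = y := hleaf z hadj
  have hyq : y ∈ q.support := by
    have : z ∈ q.reverse.support := by rw [hq2]; simp
    rw [Walk.support_reverse, List.mem_reverse] at this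
    rwa [hz] at this
  obtain ⟨z', hadj', r2, hr2⟩ := Walk.exists_eq_cons_of_ne (Ne.symm hv) r
  have hz' : z' = y := hleaf z' hadj'
  have hyr : y ∈ r.support.tail := by
    rw [hr2]; simp [Walk.support_cons]
    rw [← hz']; exact Walk.start_mem_support r2
  have hnodup := hp.support_nodup
  rw [hspec, Walk.support_append] at hnodup
  exact (List.disjoint_of_nodup_append hnodup) hyq hyr

lemma walk_lift_comap {W : Type*} {T : SimpleGraph W} {x : W} :
    ∀ {u v : W} (p : T.Walk u v) (hu : u ≠ x) (hv : v ≠ x), x ∉ p.support →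
      ∃ q : (T.comap (Subtype.val : {w // w ≠ x} → W)).Walk ⟨u, hu⟩ ⟨v, hv⟩,
        q.length = p.length := by
  intro u v p
  induction p with
  | nil => intro hu hv _; exact ⟨Walk.nil, rfl⟩
  | @cons a b c h p ih =>
    intro hu hv hxs
    rw [Walk.support_cons] at hxs
    have hxp : x ∉ p.support := fun hh => hxs (List.mem_cons_of_mem _ hh)
    have hb : b ≠ x := fun hh => hxs (hh ▸ (List.mem_cons_of_mem _ p.start_mem_support))
    obtain ⟨q, hq⟩ := ih hb hv hxp
    exact ⟨Walk.cons (by exact h) q, congrArg (· + 1) hq⟩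

lemma walk_proj_comap {W : Type*} {T : SimpleGraph W} {x : W} :
    ∀ {a b : {w // w ≠ x}} (q : (T.comap (Subtype.val : {w // w ≠ x} → W)).Walk a b),
      ∃ p : T.Walk ↑a ↑b, p.length = q.length := by
  intro a b q
  induction q with
  | nil => exact ⟨Walk.nil, rfl⟩
  | @cons a b c h q ih =>
    obtain ⟨p, hp⟩ := ih
    exact ⟨Walk.cons h p, congrArg (· + 1) hp⟩

lemma comap_leaf_edist {W : Type*} {T : SimpleGraph W} {x y : W}
    (hleaf : ∀ z, T.Adj x z → z = y) (a b : {w // w ≠ x}) :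
    (T.comap (Subtype.val : {w // w ≠ x} → W)).edist a b = T.edist ↑a ↑b := by
  classical
  refine le_antisymm ?_ ?_
  · rcases eq_or_ne (T.edist ↑a ↑b) ⊤ with h | h
    · rw [h]; exact le_top
    obtain ⟨p, hp⟩ := exists_walk_of_edist_ne_top h
    have hpath := p.bypass_isPath
    have hnx : x ∉ p.bypass.support := leaf_not_mem_path hleaf p.bypass hpath a.2 b.2
    obtain ⟨q, hq⟩ := walk_lift_comap p.bypass a.2 b.2 hnx
    calc (T.comap _).edist a b ≤ (q.length : ℕ∞) := SimpleGraph.edist_le q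
      _ ≤ (p.length : ℕ∞) := by exact_mod_cast hq ▸ Nat.cast_le.mpr p.length_bypass_le
      _ = T.edist ↑a ↑b := hp
  · rcases eq_or_ne ((T.comap (Subtype.val : {w // w ≠ x} → W)).edist a b) ⊤ with h | h
    · rw [h]; exact le_top
    obtain ⟨q, hq⟩ := exists_walk_of_edist_ne_top h
    obtain ⟨p, hp⟩ := walk_proj_comap q
    calc T.edist ↑a ↑b ≤ (p.length : ℕ∞) := SimpleGraph.edist_le p
      _ = (q.length : ℕ∞) := by rw [hp]
      _ = _ := hq

lemma comap_leaf_isTree {W : Type*} {T : SimpleGraph W} {x y : W} (ht : T.IsTree)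
    (hleaf : ∀ z, T.Adj x z → z = y) [Nonempty {w : W // w ≠ x}] :
    (T.comap (Subtype.val : {w // w ≠ x} → W)).IsTree := by
  classical
  constructor
  · refine SimpleGraph.Connected.mk fun a b => ?_
    obtain ⟨p⟩ := ht.isConnected a.1 b.1
    have hpath := p.bypass_isPath
    have hnx : x ∉ p.bypass.support := leaf_not_mem_path hleaf p.bypass hpath a.2 b.2
    obtain ⟨q, _⟩ := walk_lift_comap p.bypass a.2 b.2 hnx
    exact Walk.reachable q
  · intro v c hc
    have hinj : Function.Injective (SimpleGraph.Hom.comap (Subtype.val : {w // w ≠ x} → W) T) :=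
      fun a b hab => Subtype.ext hab
    exact ht.IsAcyclic _ ((Walk.map_isCycle_iff_of_injective hinj).mpr hc)

lemma leaf_edist {W : Type*} {T : SimpleGraph W} {x y : W} (hxy : T.Adj x y)
    (hleaf : ∀ z, T.Adj x z → z = y) {v : W} (hv : v ≠ x) :
    T.edist x v = T.edist y v + 1 := by
  refine le_antisymm ?_ ?_
  · calc T.edist x v ≤ T.edist x y + T.edist y v := SimpleGraph.edist_triangle
      _ = 1 + T.edist y v := by rw [edist_eq_one_iff_adj.mpr hxy]
      _ = T.edist y v + 1 := add_comm _ _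
  · rcases eq_or_ne (T.edist x v) ⊤ with h | h
    · rw [h]; exact le_top
    obtain ⟨p, hp⟩ := exists_walk_of_edist_ne_top h
    obtain ⟨z, hadj, p', hp'⟩ := Walk.exists_eq_cons_of_ne (Ne.symm hv) p
    have hz : z = y := hleaf z hadj
    have hle : T.edist y v ≤ (p'.length : ℕ∞) := hz ▸ SimpleGraph.edist_le p'
    rw [← hp, hp', Walk.length_cons]
    push_cast
    exact add_le_add_left hle 1

lemma exists_leaf {W : Type*} [Fintype W] {T : SimpleGraph W} (ht : T.IsTree)
    (h2 : 2 ≤ Fintype.card W) :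
    ∃ x y, T.Adj x y ∧ ∀ z, T.Adj x z → z = y := by
  classical
  have hsum : ∑ v, T.degree v = 2 * T.edgeFinset.card := T.sum_degrees_eq_twice_card_edges
  have hcard := ht.card_edgeFinset
  have hdeg1 : ∃ x, T.degree x ≤ 1 := by
    by_contra hcon
    push_neg at hcon
    have : 2 * Fintype.card W ≤ ∑ v, T.degree v := by
      calc 2 * Fintype.card W = ∑ _v : W, 2 := by simp [mul_comm]
        _ ≤ ∑ v, T.degree v := Finset.sum_le_sum (fun v _ => hcon v)
    omega
  obtain ⟨x, hx⟩ := hdeg1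
  have hpos : 1 ≤ T.degree x := by
    obtain ⟨v, hv⟩ := Fintype.exists_ne_of_one_lt_card (by omega) x
    obtain ⟨p⟩ := ht.isConnected x v
    obtain ⟨z, hadj, _, _⟩ := Walk.exists_eq_cons_of_ne (Ne.symm hv) p
    have : z ∈ T.neighborFinset x := by simpa using hadj
    have := Finset.card_pos.mpr ⟨z, this⟩
    exact this
  have hdeg : T.degree x = 1 := le_antisymm hx hpos
  obtain ⟨y, hy⟩ := Finset.card_eq_one.mp hdeg
  refine ⟨x, y, ?_, ?_⟩
  · have : y ∈ T.neighborFinset x := by rw [hy]; simp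
    simpa using this
  · intro z hz
    have : z ∈ T.neighborFinset x := by simpa using hz
    rw [hy, Finset.mem_singleton] at this
    exact this


lemma exists_good_layer {V : Type} [Fintype V] {m : ℕ} (hm : Fintype.card V = m)
    (R : (V × Fin (m+1)) → (V × Fin (m+1)) → Prop)
    (htot : ∀ (u : V) (i j : Fin (m+1)), i ≠ j → R (u,i) (u,j) ∨ R (u,j) (u,i)) :
    ∃ i : Fin (m+1), ∀ u : V, ∃ j, j ≠ i ∧ R (u,i) (u,j) := by
  by_contra hc
  push_neg at hc
  choose g hg using hc
  have hlt : Fintype.card V < Fintype.card (Fin (m+1)) := by simp [hm]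
  obtain ⟨i, i', hne, heq⟩ := Fintype.exists_ne_map_eq_of_card_lt g hlt
  rcases htot (g i) i i' hne with hr | hr
  · exact hg i i' hne.symm hr
  · exact hg i' i hne (heq ▸ hr)

end AuxIsoRamsey

open SimpleGraph in
theorem stmt4 (n m : ℕ) (hn : 1 ≤ n) (hm : 1 ≤ m)
    (h : ∃ (V : Type) (_ : Fintype V) (G : SimpleGraph V),
      Fintype.card V = m ∧ IsoRamseyArrowTrees G n) :
    ∃ (V : Type) (_ : Fintype V) (G : SimpleGraph V),
      Fintype.card V = m * (m + 1) ∧ IsoRamseyArrowTrees G (n + 1) := by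
  classical
  obtain ⟨V, instV, G, hcardV, hG⟩ := h
  refine ⟨V × Fin (m+1), inferInstance, G □ (⊤ : SimpleGraph (Fin (m+1))), ?_, ?_⟩
  · simp [hcardV]
  intro W instW hcardW E hE D' hD'
  obtain ⟨hdig, htree⟩ := hE
  have hEirr : ∀ w, ¬ E w w := fun w hw => hdig w w ⟨hw, hw⟩
  have hnoadj : ∀ p q, ¬ (G □ (⊤ : SimpleGraph (Fin (m+1)))).Adj p q → ¬ D' p q :=
    fun p q hna hd => hna ((hD'.2 p q).mpr (Or.inl hd))
  have h2 : 2 ≤ Fintype.card W := by omega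
  obtain ⟨x, y, hxy, hleaf⟩ := exists_leaf htree h2
  have hyx : y ≠ x := hxy.ne'
  have hExz : ∀ z, E x z → z = y := by
    intro z hz
    rcases eq_or_ne z x with rfl | hzx
    · exact absurd hz (hEirr z)
    · exact hleaf z ((SimpleGraph.fromRel_adj E x z).mpr ⟨Ne.symm hzx, Or.inl hz⟩)
  have hEzx : ∀ z, E z x → z = y := by
    intro z hz
    rcases eq_or_ne z x with rfl | hzx
    · exact absurd hz (hEirr z)
    · exact hleaf z ((SimpleGraph.fromRel_adj E x z).mpr ⟨Ne.symm hzx, Or.inr hz⟩)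
  have hor : E y x ∨ E x y := by
    have := (SimpleGraph.fromRel_adj E x y).mp hxy
    tauto
  have hcard' : Fintype.card {w : W // w ≠ x} = n := by
    have h3 : Fintype.card {w : W // ¬ (w = x)}
        = Fintype.card W - Fintype.card {w : W // w = x} :=
      Fintype.card_subtype_compl _
    rw [Fintype.card_subtype_eq, hcardW] at h3
    simpa using h3
  have hne' : Nonempty {w : W // w ≠ x} := by
    rw [← Fintype.card_pos_iff, hcard']; omega
  let E' : {w : W // w ≠ x} → {w : W // w ≠ x} → Prop := fun a b => E ↑a ↑b
  have hfromRel : SimpleGraph.fromRel E' = (SimpleGraph.fromRel E).comap (Subtype.val) := by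
    ext a b
    rw [SimpleGraph.comap_adj, SimpleGraph.fromRel_adj, SimpleGraph.fromRel_adj]
    constructor
    · rintro ⟨h1, h2⟩; exact ⟨Subtype.coe_ne_coe.mpr h1, h2⟩
    · rintro ⟨h1, h2⟩; exact ⟨Subtype.coe_ne_coe.mp h1, h2⟩
  have hE' : IsOrientedTree E' := by
    refine ⟨fun a b hab => hdig ↑a ↑b hab, ?_⟩
    rw [hfromRel]
    exact comap_leaf_isTree htree hleaf
  set R : (V × Fin (m+1)) → (V × Fin (m+1)) → Prop :=
    (if E y x then D' else fun p q => D' q p) with hR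
  have hfiberadj : ∀ (u : V) (i j : Fin (m+1)), i ≠ j →
      (G □ (⊤ : SimpleGraph (Fin (m+1)))).Adj (u, i) (u, j) := by
    intro u i j hij
    exact SimpleGraph.boxProd_adj_right.mpr (by simpa using hij)
  have htot : ∀ (u : V) (i j : Fin (m+1)), i ≠ j → R (u,i) (u,j) ∨ R (u,j) (u,i) := by
    intro u i j hij
    have hor2 := (hD'.2 _ _).mp (hfiberadj u i j hij)
    by_cases hE1 : E y x
    · rw [hR, if_pos hE1]; tauto
    · rw [hR, if_neg hE1]; tauto
  obtain ⟨i, hi⟩ := exists_good_layer hcardV R htot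
  let Di : V → V → Prop := fun a b => D' (a, i) (b, i)
  have hDi : IsOrientation G Di := by
    refine ⟨fun a b => hD'.1 _ _, fun a b => ?_⟩
    have hiff : G.Adj a b ↔ (G □ (⊤ : SimpleGraph (Fin (m+1)))).Adj (a,i) (b,i) :=
      SimpleGraph.boxProd_adj_left.symm
    rw [hiff]; exact hD'.2 _ _
  obtain ⟨f', hfinj, harc, hdist⟩ := hG _ inferInstance hcard' E' hE' Di hDi
  set u₀ : V := f' ⟨y, hyx⟩ with hu₀
  obtain ⟨j, hjne, hjR⟩ := hi u₀
  have hdir1 : E y x → D' (u₀, i) (u₀, j) := by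
    intro hE1; rw [hR, if_pos hE1] at hjR; exact hjR
  have hdir2 : ¬ E y x → D' (u₀, j) (u₀, i) := by
    intro hE1; rw [hR, if_neg hE1] at hjR; exact hjR
  have hdistT : ∀ a b : {w : W // w ≠ x},
      (SimpleGraph.fromRel E).edist ↑a ↑b = G.edist (f' a) (f' b) := by
    intro a b
    rw [← comap_leaf_edist hleaf a b, ← hfromRel]
    exact hdist a b
  let f : W → V × Fin (m+1) := fun w => if hw : w = x then (u₀, j) else (f' ⟨w, hw⟩, i)
  have hfx : f x = (u₀, j) := by simp [f]
  have hfne : ∀ (w : W) (hw : w ≠ x), f w = (f' ⟨w, hw⟩, i) := by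
    intro w hw; simp [f, hw]
  have hfy : f y = (u₀, i) := hfne y hyx
  refine ⟨f, ?_, ?_, ?_⟩
  · -- injective
    intro a b hab
    by_cases ha : a = x <;> by_cases hb : b = x
    · rw [ha, hb]
    · rw [ha, hfx, hfne b hb, Prod.mk.injEq] at hab
      exact absurd hab.2 hjne
    · rw [hb, hfx, hfne a ha, Prod.mk.injEq] at hab
      exact absurd hab.2.symm hjne
    · rw [hfne a ha, hfne b hb] at hab
      have := hfinj (Prod.ext_iff.mp hab).1
      exact congrArg Subtype.val this
  · -- arcs
    intro a b
    by_cases ha : a = x <;> by_cases hb : b = x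
    · rw [ha, hb, hfx]
      exact ⟨fun hc => absurd hc (hEirr x),
        fun hc => absurd ⟨hc, hc⟩ (hD'.1 _ _)⟩
    · rw [ha]
      by_cases hby : b = y
      · rw [hby, hfx, hfy]
        by_cases hE1 : E y x
        · constructor
          · intro hExy; exact absurd ⟨hExy, hE1⟩ (hdig x y)
          · intro hd; exact absurd ⟨hdir1 hE1, hd⟩ (hD'.1 _ _)
        · exact ⟨fun _ => hdir2 hE1, fun _ => hor.resolve_left hE1⟩
      · rw [hfx, hfne b hb]
        constructor
        · intro hExb; exact absurd (hExz b hExb) hby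
        · intro hd
          refine absurd hd (hnoadj _ _ ?_)
          intro hadj
          rcases SimpleGraph.boxProd_adj.mp hadj with ⟨_, hji⟩ | ⟨_, hu⟩
          · exact hjne hji
          · exact hby (congrArg Subtype.val (hfinj hu)).symm
    · rw [hb]
      by_cases hay : a = y
      · rw [hay, hfx, hfy]
        by_cases hE1 : E y x
        · exact ⟨fun _ => hdir1 hE1, fun _ => hE1⟩
        · constructor
          · intro hc; exact absurd hc hE1
          · intro hd; exact absurd ⟨hd, hdir2 hE1⟩ (hD'.1 _ _)
      · rw [hfx, hfne a ha]
        constructor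
        · intro hEax; exact absurd (hEzx a hEax) hay
        · intro hd
          refine absurd hd (hnoadj _ _ ?_)
          intro hadj
          rcases SimpleGraph.boxProd_adj.mp hadj with ⟨_, hij⟩ | ⟨_, hu⟩
          · exact hjne hij.symm
          · exact hay (congrArg Subtype.val (hfinj hu.symm)).symm
    · rw [hfne a ha, hfne b hb]
      exact harc ⟨a, ha⟩ ⟨b, hb⟩
  · -- distances
    intro a b
    by_cases ha : a = x <;> by_cases hb : b = x
    · rw [ha, hb, SimpleGraph.edist_self, SimpleGraph.edist_self]
    · rw [ha, hfx, hfne b hb, leaf_edist hxy hleaf hb, edist_cross G u₀ (f' ⟨b, hb⟩) hjne,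
        hdistT ⟨y, hyx⟩ ⟨b, hb⟩]
    · rw [hb, SimpleGraph.edist_comm, SimpleGraph.edist_comm (G := G □ (⊤ : SimpleGraph (Fin (m+1)))),
        hfx, hfne a ha, leaf_edist hxy hleaf ha, edist_cross G u₀ (f' ⟨a, ha⟩) hjne,
        hdistT ⟨y, hyx⟩ ⟨a, ha⟩]
    · rw [hfne a ha, hfne b hb, edist_layer, hdistT ⟨a, ha⟩ ⟨b, hb⟩]
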